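/- For n ≥ 2, the group of polynomial automorphisms of affine n-space over an infinite field acts infinitely transitively on the set of K-points of affine n-space. -/

import Mathlib

open MvPolynomial Finset

namespace Stmt5Aux

variable {K : Type*} [Field K] {n : ℕ}

theorem eval_bind1 {K : Type*} [CommSemiring K] {n : ℕ} (x : Fin n → K)
    (q : Fin n → MvPolynomial (Fin n) K) (p : MvPolynomial (Fin n) K) :
    MvPolynomial.eval x (MvPolynomial.bind₁ q p)
      = MvPolynomial.eval (fun j => MvPolynomial.eval x (q j)) p := by
  rw [MvPolynomial.eval, MvPolynomial.eval₂Hom_bind₁, ← MvPolynomial.eval]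

/-- A polynomial automorphism with explicit polynomial inverse. -/
structure PA (K : Type*) [CommSemiring K] (n : ℕ) where
  f : (Fin n → K) → (Fin n → K)
  g : (Fin n → K) → (Fin n → K)
  pf : Fin n → MvPolynomial (Fin n) K
  pg : Fin n → MvPolynomial (Fin n) K
  hf : ∀ x i, f x i = MvPolynomial.eval x (pf i)
  hg : ∀ x i, g x i = MvPolynomial.eval x (pg i)
  gf : ∀ x, g (f x) = x
  fg : ∀ x, f (g x) = x

noncomputable def PA.comp (A B : PA K n) : PA K n where
  f := A.f ∘ B.f
  g := B.g ∘ A.g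
  pf i := bind₁ B.pf (A.pf i)
  pg i := bind₁ A.pg (B.pg i)
  hf x i := by
    have hB : B.f x = fun j => MvPolynomial.eval x (B.pf j) := funext (B.hf x)
    simp only [Function.comp_apply, eval_bind1, ← hB, A.hf]
  hg x i := by
    have hA : A.g x = fun j => MvPolynomial.eval x (A.pg j) := funext (A.hg x)
    simp only [Function.comp_apply, eval_bind1, ← hA, B.hg]
  gf x := by simp only [Function.comp_apply, A.gf, B.gf]
  fg x := by simp only [Function.comp_apply, B.fg, A.fg]

noncomputable def PA.symm (A : PA K n) : PA K n where
  f := A.g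
  g := A.f
  pf := A.pg
  pg := A.pf
  hf := A.hg
  hg := A.hf
  gf := A.fg
  fg := A.gf

theorem eval_zeroed (i0 : Fin n) (P : MvPolynomial (Fin n) K) (x : Fin n → K) :
    MvPolynomial.eval x (bind₁ (fun j => if j = i0 then 0 else X j) P)
      = MvPolynomial.eval (Function.update x i0 0) P := by
  rw [eval_bind1]
  have h : (fun j => MvPolynomial.eval x (if j = i0 then 0 else X j))
      = Function.update x i0 0 := by
    funext j
    rcases eq_or_ne j i0 with h | h <;> simp [h, Function.update]
  rw [h]

/-- Shear in coordinate `i0`, adding a polynomial of the other coordinates. -/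
noncomputable def shearA (i0 : Fin n) (P : MvPolynomial (Fin n) K) : PA K n where
  f x := Function.update x i0 (x i0 + MvPolynomial.eval (Function.update x i0 0) P)
  g x := Function.update x i0 (x i0 - MvPolynomial.eval (Function.update x i0 0) P)
  pf i := if i = i0 then X i0 + bind₁ (fun j => if j = i0 then 0 else X j) P else X i
  pg i := if i = i0 then X i0 - bind₁ (fun j => if j = i0 then 0 else X j) P else X i
  hf x i := by
    rcases eq_or_ne i i0 with h | h
    · subst h; simp [eval_zeroed]
    · simp [h, eval_zeroed]
  hg x i := by
    rcases eq_or_ne i i0 with h | h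
    · subst h; simp [eval_zeroed]
    · simp [h, eval_zeroed]
  gf x := by
    have key : Function.update
        (Function.update x i0 (x i0 + MvPolynomial.eval (Function.update x i0 0) P)) i0 0
        = Function.update x i0 0 := by rw [Function.update_idem]
    funext k
    rcases eq_or_ne k i0 with h | h
    · subst h; simp [key]
    · simp [h, key]
  fg x := by
    have key : Function.update
        (Function.update x i0 (x i0 - MvPolynomial.eval (Function.update x i0 0) P)) i0 0
        = Function.update x i0 0 := by rw [Function.update_idem]
    funext k
    rcases eq_or_ne k i0 with h | h
    · subst h; simp [key]
    · simp [h, key]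

theorem eval_uni (i0 : Fin n) (q : Polynomial K) (x : Fin n → K) :
    MvPolynomial.eval x (Polynomial.eval₂ MvPolynomial.C (X i0) q)
      = Polynomial.eval (x i0) q := by
  rw [Polynomial.hom_eval₂]
  have h1 : (MvPolynomial.eval x).comp (MvPolynomial.C (σ := Fin n)) = RingHom.id K := by
    ext r; simp
  rw [h1, MvPolynomial.eval_X, Polynomial.eval]

/-- Shear in all coordinates other than `i0`, adding polynomials of `x i0`. -/
noncomputable def shearB (i0 : Fin n) (Q : Fin n → Polynomial K) : PA K n where
  f x i := if i = i0 then x i0 else x i + (Q i).eval (x i0)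
  g x i := if i = i0 then x i0 else x i - (Q i).eval (x i0)
  pf i := if i = i0 then X i0 else X i + Polynomial.eval₂ MvPolynomial.C (X i0) (Q i)
  pg i := if i = i0 then X i0 else X i - Polynomial.eval₂ MvPolynomial.C (X i0) (Q i)
  hf x i := by rcases eq_or_ne i i0 with h | h <;> simp [h, eval_uni]
  hg x i := by rcases eq_or_ne i i0 with h | h <;> simp [h, eval_uni]
  gf x := by funext k; rcases eq_or_ne k i0 with h | h <;> simp [h]
  fg x := by funext k; rcases eq_or_ne k i0 with h | h <;> simp [h]

theorem shearA_f (i0 : Fin n) (P : MvPolynomial (Fin n) K) (x : Fin n → K) :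
    (shearA i0 P).f x
      = Function.update x i0 (x i0 + MvPolynomial.eval (Function.update x i0 0) P) := rfl

theorem shearB_f (i0 : Fin n) (Q : Fin n → Polynomial K) (x : Fin n → K) (k : Fin n) :
    (shearB i0 Q).f x k = if k = i0 then x i0 else x k + (Q k).eval (x i0) := rfl

theorem exists_interp {m : ℕ} (v : Fin m → K) (hv : Function.Injective v) (r : Fin m → K) :
    ∃ q : Polynomial K, ∀ i, q.eval (v i) = r i :=
  ⟨Lagrange.interpolate Finset.univ v r, fun i =>
    Lagrange.eval_interpolate_at_node r hv.injOn (Finset.mem_univ i)⟩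

theorem exists_sep [Infinite K] {m : ℕ} (a : Fin m → Fin n → K)
    (ha : Function.Injective a) :
    ∃ c : K, Function.Injective (fun i => ∑ k : Fin n, c ^ (k : ℕ) * a i k) := by
  classical
  set R : Fin m × Fin m → Polynomial K := fun p =>
    ∑ k : Fin n, Polynomial.C (a p.1 k - a p.2 k) * Polynomial.X ^ (k : ℕ) with hRdef
  have hcoeff : ∀ p (k : Fin n), (R p).coeff (k : ℕ) = a p.1 k - a p.2 k := by
    intro p k
    rw [hRdef]
    rw [Polynomial.finset_sum_coeff]
    have : ∀ j : Fin n,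
        (Polynomial.C (a p.1 j - a p.2 j) * Polynomial.X ^ (j : ℕ)).coeff (k : ℕ)
          = if j = k then a p.1 j - a p.2 j else 0 := by
      intro j
      rw [Polynomial.coeff_C_mul, Polynomial.coeff_X_pow]
      rcases eq_or_ne j k with h | h
      · subst h; simp
      · have hval : (j : ℕ) ≠ (k : ℕ) := fun hc => h (Fin.val_injective hc)
        simp [h, hval, hval.symm]
    rw [Finset.sum_congr rfl fun j _ => this j, Finset.sum_ite_eq' Finset.univ k]
    simp
  have hR : ∀ p ∈ (Finset.univ (α := Fin m)).offDiag, R p ≠ 0 := by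
    intro p hp h0
    have hne : p.1 ≠ p.2 := (Finset.mem_offDiag.mp hp).2.2
    have : a p.1 ≠ a p.2 := fun h => hne (ha h)
    obtain ⟨k, hk⟩ := Function.ne_iff.mp this
    have := hcoeff p k
    rw [h0] at this
    simp at this
    exact hk (sub_eq_zero.mp this.symm)
  have hQ : (∏ p ∈ (Finset.univ (α := Fin m)).offDiag, R p) ≠ 0 :=
    Finset.prod_ne_zero_iff.mpr hR
  have : ∃ c : K, Polynomial.eval c (∏ p ∈ (Finset.univ (α := Fin m)).offDiag, R p) ≠ 0 := by
    by_contra h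
    push_neg at h
    exact hQ (Polynomial.zero_of_eval_zero _ h)
  obtain ⟨c, hc⟩ := this
  rw [Polynomial.eval_prod] at hc
  have hfac := Finset.prod_ne_zero_iff.mp hc
  refine ⟨c, fun i j hij => ?_⟩
  by_contra hne
  have hmem : (i, j) ∈ (Finset.univ (α := Fin m)).offDiag :=
    Finset.mem_offDiag.mpr ⟨Finset.mem_univ _, Finset.mem_univ _, hne⟩
  have hval : Polynomial.eval c (R (i, j)) = 0 := by
    rw [hRdef]
    simp only [Polynomial.eval_finset_sum, Polynomial.eval_mul, Polynomial.eval_C,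
      Polynomial.eval_pow, Polynomial.eval_X]
    have : ∀ k : Fin n, (a i k - a j k) * c ^ (k : ℕ)
        = c ^ (k : ℕ) * a i k - c ^ (k : ℕ) * a j k := by intro k; ring
    rw [Finset.sum_congr rfl fun k _ => this k, Finset.sum_sub_distrib]
    have := hij
    simp only at this
    rw [this, sub_self]
  exact hfac (i, j) hmem hval

theorem exists_to_canonical [Infinite K] (hn : 2 ≤ n) {m : ℕ} (s : Fin m → K)
    (hs : Function.Injective s) (a : Fin m → Fin n → K) (ha : Function.Injective a) :
    ∃ A : PA K n, ∀ i, A.f (a i) = fun k : Fin n => if (k : ℕ) ≤ 1 then s i else 0 := by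
  classical
  set i0 : Fin n := ⟨0, by omega⟩ with hi0
  set i1 : Fin n := ⟨1, by omega⟩ with hi1
  have h01 : i1 ≠ i0 := by simp [hi0, hi1, Fin.ext_iff]
  -- Step 1: make the 0-th coordinates distinct via a linear shear
  obtain ⟨c, hc⟩ := exists_sep a ha
  set v : Fin m → K := fun i => ∑ k : Fin n, c ^ (k : ℕ) * a i k with hv
  set P1 : MvPolynomial (Fin n) K := ∑ k : Fin n, MvPolynomial.C (c ^ (k : ℕ)) * X k with hP1
  set S1 := shearA i0 P1 with hS1
  have hval : ∀ x : Fin n → K,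
      x i0 + MvPolynomial.eval (Function.update x i0 0) P1 = ∑ k : Fin n, c ^ (k : ℕ) * x k := by
    intro x
    have he : MvPolynomial.eval (Function.update x i0 0) P1
        = ∑ k : Fin n, c ^ (k : ℕ) * Function.update x i0 0 k := by
      rw [hP1]; simp
    rw [he, ← Finset.add_sum_erase _ _ (Finset.mem_univ i0),
        ← Finset.add_sum_erase _ (fun k : Fin n => c ^ (k : ℕ) * x k) (Finset.mem_univ i0)]
    have h1 : Function.update x i0 0 i0 = 0 := by simp
    have h2 : ∀ k ∈ Finset.univ.erase i0,
        c ^ (k : ℕ) * Function.update x i0 0 k = c ^ (k : ℕ) * x k := by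
      intro k hk
      rw [Function.update_of_ne (Finset.mem_erase.mp hk).1]
    rw [Finset.sum_congr rfl h2, h1]
    have h0 : ((i0 : Fin n) : ℕ) = 0 := rfl
    rw [h0, pow_zero]
    ring
  set a1 : Fin m → Fin n → K := fun i => S1.f (a i) with ha1
  have ha1i0 : ∀ i, a1 i i0 = v i := by
    intro i
    simp only [ha1, hS1, shearA_f]
    rw [Function.update_self, hval]
  have ha1k : ∀ i (k : Fin n), k ≠ i0 → a1 i k = a i k := by
    intro i k hk
    simp only [ha1, hS1, shearA_f]
    rw [Function.update_of_ne hk]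
  have hvinj : Function.Injective v := hc
  -- Step 2: shear the other coordinates to prescribed values
  have hQex : ∀ k : Fin n, ∃ q : Polynomial K,
      ∀ i, q.eval (v i) = (if k = i1 then s i else 0) - a1 i k :=
    fun k => exists_interp v hvinj _
  choose Q hQ using hQex
  set S2 := shearB i0 Q with hS2
  set a2 : Fin m → Fin n → K := fun i => S2.f (a1 i) with ha2
  have ha2v : ∀ i k, a2 i k = if k = i0 then v i else if k = i1 then s i else 0 := by
    intro i k
    have hsh : a2 i k = if k = i0 then a1 i i0 else a1 i k + (Q k).eval (a1 i i0) := by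
      simp only [ha2, hS2, shearB_f]
    rw [hsh]
    rcases eq_or_ne k i0 with h | h
    · rw [if_pos h, if_pos h, ha1i0]
    · rw [if_neg h, if_neg h, ha1i0, hQ k i]
      ring
  -- Step 3: fix the 0-th coordinate using coordinate 1
  obtain ⟨g3, hg3⟩ := exists_interp s hs (fun i => s i - v i)
  set P3 : MvPolynomial (Fin n) K := Polynomial.eval₂ MvPolynomial.C (X i1) g3 with hP3
  set S3 := shearA i0 P3 with hS3
  refine ⟨(S3.comp S2).comp S1, fun i => ?_⟩
  have hfin : ((S3.comp S2).comp S1).f (a i)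
      = Function.update (a2 i) i0 (a2 i i0
          + MvPolynomial.eval (Function.update (a2 i) i0 0) P3) := by
    simp only [PA.comp, Function.comp_apply, hS3, shearA_f]
    rfl
  rw [hfin]
  have he3 : MvPolynomial.eval (Function.update (a2 i) i0 0) P3 = s i - v i := by
    rw [hP3, eval_uni]
    rw [Function.update_of_ne h01, ha2v]
    simp [h01, hg3]
  have ha2i0 : a2 i i0 = v i := by rw [ha2v]; simp
  rw [he3, ha2i0]
  funext k
  rcases eq_or_ne k i0 with h | h
  · subst h
    rw [Function.update_self]
    have : ((i0 : Fin n) : ℕ) ≤ 1 := by simp [hi0]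
    rw [if_pos this]
    ring
  · rw [Function.update_of_ne h, ha2v, if_neg h]
    rcases eq_or_ne k i1 with h1 | h1
    · subst h1
      have : ((i1 : Fin n) : ℕ) ≤ 1 := by simp [hi1]
      simp [this]
    · have hk0 : (k : ℕ) ≠ 0 := by
        intro hk; exact h (Fin.val_injective (by simp [hi0, hk]))
      have hk1 : (k : ℕ) ≠ 1 := by
        intro hk; exact h1 (Fin.val_injective (by simp [hi1, hk]))
      have : ¬ ((k : ℕ) ≤ 1) := by omega
      simp [this, h1]

end Stmt5Aux

/-- For n ≥ 2 the group of polynomial automorphisms of affine n-space over an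
infinite field acts infinitely transitively on K^n. -/
theorem stmt_5 {K : Type*} [Field K] [Infinite K] {n : ℕ} (hn : 2 ≤ n)
    (m : ℕ) (a b : Fin m → (Fin n → K))
    (ha : Function.Injective a) (hb : Function.Injective b) :
    ∃ φ ψ : (Fin n → K) → (Fin n → K),
      (∃ p : Fin n → MvPolynomial (Fin n) K, ∀ x i, φ x i = MvPolynomial.eval x (p i)) ∧
      (∃ q : Fin n → MvPolynomial (Fin n) K, ∀ x i, ψ x i = MvPolynomial.eval x (q i)) ∧
      φ ∘ ψ = id ∧ ψ ∘ φ = id ∧ ∀ i, φ (a i) = b i := by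
  classical
  set s : Fin m → K := fun i => Infinite.natEmbedding K (i : ℕ) with hsdef
  have hs : Function.Injective s :=
    fun i j h => Fin.val_injective ((Infinite.natEmbedding K).injective h)
  obtain ⟨A, hA⟩ := Stmt5Aux.exists_to_canonical hn s hs a ha
  obtain ⟨B, hB⟩ := Stmt5Aux.exists_to_canonical hn s hs b hb
  set T := (Stmt5Aux.PA.comp B.symm A) with hT
  refine ⟨T.f, T.g, ⟨T.pf, T.hf⟩, ⟨T.pg, T.hg⟩, funext T.fg, funext T.gf, fun i => ?_⟩
  have h1 : T.f (a i) = B.g (A.f (a i)) := rfl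
  rw [h1, hA i, ← hB i, B.gf]
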